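/- arXiv:2107.00888 — 6 statements merged into one kernel-verified Lean document; each statement's English description precedes it below -/
import Mathlib

section
/- Let A : ℕ → ℝ satisfy A 1 = 0, A 2 = 1, and A (l+1) = -∑_{i=1}^{l} A i * A (l+1-i) for l ≥ 2. Then A l = 0 for all odd l ≥ 1, and A (2k) = (-1)^(k-1) * catalan (k-1) for all k ≥ 1. -/
theorem stmt_1 (A : ℕ → ℝ)
    (hA1 : A 1 = 0) (hA2 : A 2 = 1)
    (hrec : ∀ l, 2 ≤ l → A (l + 1) = -(∑ i ∈ Finset.Icc 1 l, A i * A (l + 1 - i))) :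
    (∀ l, 1 ≤ l → Odd l → A l = 0) ∧
      (∀ k, 1 ≤ k → A (2 * k) = (-1 : ℝ) ^ (k - 1) * (catalan (k - 1) : ℝ)) := by
  have key : ∀ n, (Odd n → A n = 0) ∧
      (∀ k, 1 ≤ k → n = 2 * k → A n = (-1 : ℝ) ^ (k - 1) * (catalan (k - 1) : ℝ)) := by
    intro n
    induction n using Nat.strong_induction_on with
    | _ n ih =>
      match n, ih with
      | 0, _ => exact ⟨fun h => absurd h (by decide), fun k hk h => by omega⟩
      | 1, _ => exact ⟨fun _ => hA1, fun k hk h => by omega⟩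
      | 2, _ =>
        refine ⟨fun h => absurd h (by decide), fun k hk h => ?_⟩
        have hk1 : k = 1 := by omega
        subst hk1
        simpa using hA2
      | (l + 3), ih =>
        have hl : 2 ≤ l + 2 := by omega
        have hrec' := hrec (l + 2) hl
        constructor
        · -- odd case
          intro hodd
          rw [hrec']
          have hz : ∀ i ∈ Finset.Icc 1 (l + 2), A i * A (l + 2 + 1 - i) = 0 := by
            intro i hi
            simp only [Finset.mem_Icc] at hi
            rcases Nat.even_or_odd i with he | ho
            · have hodd2 : Odd (l + 3 - i) :=
                Nat.Odd.sub_even (by omega) (by simpa using hodd) he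
              have := (ih (l + 3 - i) (by omega)).1 hodd2
              simp [this]
            · have := (ih i (by omega)).1 ho
              simp [this]
          rw [Finset.sum_eq_zero hz]
          simp
        · -- even case
          intro k hk hn
          have hk2 : 2 ≤ k := by omega
          rw [hrec']
          have hsub : (Finset.Icc 1 (k - 1)).image (2 * ·) ⊆ Finset.Icc 1 (l + 2) := by
            intro x hx
            simp only [Finset.mem_image, Finset.mem_Icc] at hx ⊢
            obtain ⟨j, hj, rfl⟩ := hx
            omega
          have hzero : ∀ i ∈ Finset.Icc 1 (l + 2),
              i ∉ (Finset.Icc 1 (k - 1)).image (2 * ·) → A i * A (l + 2 + 1 - i) = 0 := by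
            intro i hi hni
            simp only [Finset.mem_Icc] at hi
            rcases Nat.even_or_odd i with he | ho
            · exfalso
              obtain ⟨j, rfl⟩ := he
              apply hni
              simp only [Finset.mem_image, Finset.mem_Icc]
              exact ⟨j, by omega, by omega⟩
            · have := (ih i (by omega)).1 ho
              simp [this]
          have hinj : ∀ x ∈ Finset.Icc 1 (k - 1), ∀ y ∈ Finset.Icc 1 (k - 1),
              2 * x = 2 * y → x = y := by intro x _ y _ h; omega
          rw [← Finset.sum_subset hsub hzero, Finset.sum_image hinj]
          have hterm : ∀ j ∈ Finset.Icc 1 (k - 1),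
              A (2 * j) * A (l + 2 + 1 - 2 * j)
                = (-1 : ℝ) ^ (k - 2) * ((catalan (j - 1) : ℝ) * (catalan (k - 2 - (j - 1)) : ℝ)) := by
            intro j hj
            simp only [Finset.mem_Icc] at hj
            have h1 : A (2 * j) = (-1 : ℝ) ^ (j - 1) * (catalan (j - 1) : ℝ) :=
              (ih (2 * j) (by omega)).2 j (by omega) rfl
            have h2 : l + 2 + 1 - 2 * j = 2 * (k - j) := by omega
            have h3 : A (2 * (k - j)) = (-1 : ℝ) ^ (k - j - 1) * (catalan (k - j - 1) : ℝ) :=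
              (ih (2 * (k - j)) (by omega)).2 (k - j) (by omega) rfl
            have hpow : (-1 : ℝ) ^ (j - 1) * (-1 : ℝ) ^ (k - j - 1) = (-1 : ℝ) ^ (k - 2) := by
              rw [← pow_add]
              congr 1
              omega
            have h4 : k - j - 1 = k - 2 - (j - 1) := by omega
            rw [h2, h1, h3, ← h4, ← hpow]
            ring
          rw [Finset.sum_congr rfl hterm, ← Finset.mul_sum]
          have hre : ∑ j ∈ Finset.Icc 1 (k - 1),
              ((catalan (j - 1) : ℝ) * (catalan (k - 2 - (j - 1)) : ℝ))
              = ∑ m ∈ Finset.range (k - 1), ((catalan m : ℝ) * (catalan (k - 2 - m) : ℝ)) := by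
            rw [show Finset.Icc 1 (k - 1) = Finset.Ico 1 k by
              ext x; simp only [Finset.mem_Icc, Finset.mem_Ico]; omega]
            rw [Finset.sum_Ico_eq_sum_range]
            apply Finset.sum_congr rfl
            intro m _
            have hm1 : 1 + m - 1 = m := by omega
            rw [hm1]
          have hcat : (catalan (k - 1) : ℝ)
              = ∑ m ∈ Finset.range (k - 1), ((catalan m : ℝ) * (catalan (k - 2 - m) : ℝ)) := by
            have hc := catalan_succ' (k - 2)
            rw [Finset.Nat.sum_antidiagonal_eq_sum_range_succ_mk] at hc
            have hk1 : k - 1 = k - 2 + 1 := by omega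
            rw [hk1, hc]
            push_cast
            rfl
          rw [hre, ← hcat]
          have : (-1 : ℝ) ^ (k - 1) = -(-1 : ℝ) ^ (k - 2) := by
            rw [show k - 1 = (k - 2) + 1 by omega, pow_succ]
            ring
          rw [this]
          ring
  refine ⟨fun l _ hodd => (key l).1 hodd, fun k hk => (key (2 * k)).2 k hk rfl⟩
end

section
/- With F, m, n, x, S as in the context, the matrix S * S is a scalar multiple of the identity; specifically every diagonal entry of S * S equals (n-1)(x+1)²/(4x) and every off-diagonal entry of S * S equals 0. -/
theorem stmt_6 (m n : ℕ) (hm : 0 < m) (hmn : m < n)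
    (F : Matrix (Fin m) (Fin n) ℂ)
    (hunit : ∀ j, (F.conjTranspose * F) j j = 1)
    (htight : F * F.conjTranspose = ((n : ℂ) / m) • 1)
    (hequi : ∀ i j : Fin n, i ≠ j →
      ‖(F.conjTranspose * F) i j‖ ^ 2 = ((n : ℝ) - m) / (m * ((n : ℝ) - 1)))
    (x : ℝ) (hx : x = ((n : ℝ) - m) / m)
    (S : Matrix (Fin n) (Fin n) ℂ)
    (hS : S = ((Real.sqrt (((n : ℝ) - 1) / x) : ℝ) : ℂ) •
      (F.conjTranspose * F - ((n : ℂ) / (2 * m)) • 1)) :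
    (∀ i, (S * S) i i = ((((n : ℝ) - 1) * (x + 1) ^ 2 / (4 * x) : ℝ) : ℂ)) ∧
      ∀ i j : Fin n, i ≠ j → (S * S) i j = 0 := by
  have hm0 : (m : ℂ) ≠ 0 := Nat.cast_ne_zero.mpr hm.ne'
  have hmR : (m : ℝ) ≠ 0 := Nat.cast_ne_zero.mpr hm.ne'
  set G := F.conjTranspose * F with hG
  have hGG : G * G = ((n : ℂ) / m) • G := by
    rw [hG]
    rw [Matrix.mul_assoc, ← Matrix.mul_assoc F, htight]
    simp [Matrix.smul_mul, Matrix.mul_smul, Matrix.mul_assoc]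
  set c : ℂ := ((Real.sqrt (((n : ℝ) - 1) / x) : ℝ) : ℂ) with hc
  set a : ℂ := (n : ℂ) / (2 * m) with ha
  have key : S * S = (c * c * (a * a)) • (1 : Matrix (Fin n) (Fin n) ℂ) := by
    rw [hS]
    rw [Matrix.smul_mul, Matrix.mul_smul, smul_smul]
    have hmat : (G - a • 1) * (G - a • 1) = (a * a) • (1 : Matrix (Fin n) (Fin n) ℂ) := by
      rw [Matrix.sub_mul, Matrix.mul_sub, Matrix.mul_sub, hGG,
        Matrix.smul_mul, Matrix.mul_smul, Matrix.smul_mul, Matrix.one_mul,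
        Matrix.mul_one, Matrix.one_mul, smul_smul]
      have h2a : (n : ℂ) / m = a + a := by
        rw [ha]; field_simp; ring
      rw [h2a, add_smul]
      abel
    rw [hmat, smul_smul]
  have hx0 : 0 < x := by
    rw [hx]
    apply div_pos _ (by exact_mod_cast hm)
    have : (m : ℝ) < n := by exact_mod_cast hmn
    linarith
  have hn1 : (0 : ℝ) ≤ ((n : ℝ) - 1) / x := by
    apply div_nonneg _ hx0.le
    have : (1 : ℝ) ≤ n := by exact_mod_cast (hm.trans hmn)
    linarith
  have hcc : c * c = ((((n : ℝ) - 1) / x : ℝ) : ℂ) := by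
    rw [hc, ← Complex.ofReal_mul, Real.mul_self_sqrt hn1]
  have hscal : c * c * (a * a) = ((((n : ℝ) - 1) * (x + 1) ^ 2 / (4 * x) : ℝ) : ℂ) := by
    rw [hcc, ha]
    have hxc : (x : ℂ) = ((n : ℂ) - m) / m := by
      rw [hx]; push_cast; ring
    rw [← Complex.ofReal_natCast n, ← Complex.ofReal_natCast m]
    push_cast
    rw [hx]
    push_cast
    have hnm : (n : ℂ) - m ≠ 0 := by
      have : (m : ℝ) < n := by exact_mod_cast hmn
      intro h
      have h' : ((n : ℝ) - m : ℝ) = 0 := by exact_mod_cast h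
      linarith
    field_simp
    ring
  rw [key, hscal]
  constructor
  · intro i
    simp [Matrix.smul_apply, Matrix.one_apply]
  · intro i j hij
    simp [Matrix.smul_apply, Matrix.one_apply, hij]
end

section
/- If n = 2m (aspect ratio γ = 1/2), then x = 1, s = 0, and S = √(n-1) • (Fᴴ F - I_n), which satisfies Sᴴ S = (n-1) • I_n, all diagonal entries of S are 0, and all off-diagonal entries have modulus 1 (i.e., S is a complex conference matrix). -/
theorem stmt_7 (m n : ℕ) (hm : 0 < m) (hn : n = 2 * m)
    (F : Matrix (Fin m) (Fin n) ℂ)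
    (hunit : ∀ j, (F.conjTranspose * F) j j = 1)
    (htight : F * F.conjTranspose = ((n : ℂ) / m) • 1)
    (hequi : ∀ i j : Fin n, i ≠ j →
      ‖(F.conjTranspose * F) i j‖ ^ 2 = ((n : ℝ) - m) / (m * ((n : ℝ) - 1)))
    (x : ℝ) (hx : x = ((n : ℝ) - m) / m)
    (S : Matrix (Fin n) (Fin n) ℂ)
    (hS : S = ((Real.sqrt (((n : ℝ) - 1) / x) : ℝ) : ℂ) •
      (F.conjTranspose * F - ((n : ℂ) / (2 * m)) • 1)) :
    x = 1 ∧ (1 - x) / (2 * Real.sqrt x) = 0 ∧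
      S = ((Real.sqrt ((n : ℝ) - 1) : ℝ) : ℂ) • (F.conjTranspose * F - 1) ∧
      S.conjTranspose * S = ((((n : ℝ) - 1 : ℝ) : ℂ)) • 1 ∧
      (∀ i, S i i = 0) ∧
      (∀ i j : Fin n, i ≠ j → ‖S i j‖ = 1) := by
  have hmR : (m : ℝ) ≠ 0 := Nat.cast_ne_zero.mpr hm.ne'
  have hmC : (m : ℂ) ≠ 0 := Nat.cast_ne_zero.mpr hm.ne'
  have hx1 : x = 1 := by
    subst hn hx; push_cast; field_simp; ring
  have hcoef : ((n : ℂ) / (2 * m)) = 1 := by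
    subst hn; push_cast; field_simp
  have hn1 : (1 : ℝ) ≤ (n : ℝ) - 1 := by
    subst hn
    have : (1 : ℝ) ≤ (m : ℝ) := by exact_mod_cast hm
    push_cast; linarith
  set c : ℝ := Real.sqrt ((n : ℝ) - 1) with hc
  have hS' : S = ((c : ℝ) : ℂ) • (F.conjTranspose * F - 1) := by
    rw [hS, hx1, hcoef, div_one, one_smul]
  have hG2 : (F.conjTranspose * F) * (F.conjTranspose * F)
      = (2 : ℂ) • (F.conjTranspose * F) := by
    have h2 : ((n : ℂ) / m) = 2 := by subst hn; push_cast; field_simp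
    calc (F.conjTranspose * F) * (F.conjTranspose * F)
        = F.conjTranspose * ((F * F.conjTranspose) * F) := by
          simp only [Matrix.mul_assoc]
      _ = (2 : ℂ) • (F.conjTranspose * F) := by
          rw [htight, h2, Matrix.smul_mul, Matrix.one_mul, Matrix.mul_smul]
  have hcc : ((c : ℝ) : ℂ) * ((c : ℝ) : ℂ) = (((n : ℝ) - 1 : ℝ) : ℂ) := by
    rw [← Complex.ofReal_mul, Real.mul_self_sqrt (by linarith)]
  refine ⟨hx1, by rw [hx1]; simp, hS', ?_, ?_, ?_⟩
  · rw [hS', Matrix.conjTranspose_smul, Matrix.conjTranspose_sub,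
      Matrix.conjTranspose_mul, Matrix.conjTranspose_conjTranspose,
      Matrix.conjTranspose_one]
    rw [Matrix.smul_mul, Matrix.mul_smul, smul_smul]
    have hstar : (starRingEnd ℂ) ((c : ℝ) : ℂ) = ((c : ℝ) : ℂ) := Complex.conj_ofReal c
    rw [show (star (((c:ℝ):ℂ)) : ℂ) = ((c:ℝ):ℂ) from hstar]
    rw [Matrix.sub_mul, Matrix.mul_sub, Matrix.mul_sub, Matrix.one_mul, Matrix.mul_one,
      hG2, hcc]
    congr 1
    abel_nf
    simp [two_smul]
    abel
  · intro i
    rw [hS']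
    simp [Matrix.sub_apply, hunit i]
  · intro i j hij
    have habs : ‖S i j‖ ^ 2 = 1 := by
      rw [hS']
      simp only [Matrix.smul_apply, Matrix.sub_apply, Matrix.one_apply_ne hij, sub_zero,
        smul_eq_mul, norm_mul, Complex.norm_real, Real.norm_eq_abs, mul_pow]
      rw [hequi i j hij, hc, abs_of_nonneg (Real.sqrt_nonneg _), Real.sq_sqrt (by linarith)]
      subst hn
      push_cast
      have h1 : (2 * (m:ℝ) - 1) ≠ 0 := by push_cast at hn1; linarith
      field_simp
      ring
    have := norm_nonneg (S i j)
    nlinarith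
end

section
/- Let S be an n × n Hermitian complex matrix with constant diagonal entries √(n-1)·s, off-diagonal entries of modulus 1, and S² = ((n-1)(x+1)²/(4x)) • I where s = (1-x)/(2√x), x > 0. Let P be diagonal with i.i.d. Bernoulli(p) entries. Then E[trace((PSP)²)] = n(n-1)s²p + n(n-1)p², so the normalized second moment (1/n²)·E[trace((PSP)²)] → s²p + p² as n → ∞. -/
/-- The diagonal 0/1 selection matrix for an outcome `ε`. -/
def selMatrix (n : ℕ) (ε : Fin n → Bool) : Matrix (Fin n) (Fin n) ℂ :=
  Matrix.diagonal fun i => if ε i then (1 : ℂ) else 0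

/-- Expectation over independent Bernoulli(p) diagonal entries of a ℂ-valued
functional of the outcome. -/
noncomputable def bernExp (n : ℕ) (p : ℝ) (f : (Fin n → Bool) → ℂ) : ℂ :=
  ∑ ε : Fin n → Bool, ((∏ i, if ε i then p else 1 - p : ℝ) : ℂ) * f ε

noncomputable def Wb (p : ℝ) (b : Bool) : ℂ := if b then (p:ℂ) else 1 - p

lemma sum_prod_bool {n : ℕ} (w : Fin n → Bool → ℂ) :
    ∑ ε : Fin n → Bool, ∏ k, w k (ε k) = ∏ k, ∑ b, w k b := by
  rw [Finset.prod_univ_sum, Fintype.piFinset_univ]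

lemma bern_single {n : ℕ} (p : ℝ) (i : Fin n) :
    ∑ ε : Fin n → Bool, (∏ k, Wb p (ε k)) * (if ε i then (1:ℂ) else 0) = p := by
  have h : ∀ ε : Fin n → Bool,
      (∏ k, Wb p (ε k)) * (if ε i then (1:ℂ) else 0)
        = ∏ k, (Wb p (ε k) * (if k = i then (if ε k then (1:ℂ) else 0) else 1)) := by
    intro ε
    rw [Finset.prod_mul_distrib, Finset.prod_ite_eq' Finset.univ i
      (fun k => if ε k then (1:ℂ) else 0)]
    simp
  simp only [h]
  rw [sum_prod_bool (fun k b => Wb p b * (if k = i then (if b then (1:ℂ) else 0) else 1))]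
  rw [Finset.prod_eq_single i]
  · simp [Wb]
  · intro k _ hk
    simp [Wb, hk]
  · simp

lemma bern_pair {n : ℕ} (p : ℝ) (i j : Fin n) (hij : i ≠ j) :
    ∑ ε : Fin n → Bool, (∏ k, Wb p (ε k)) *
      ((if ε i then (1:ℂ) else 0) * (if ε j then (1:ℂ) else 0)) = (p:ℂ)^2 := by
  have h : ∀ ε : Fin n → Bool,
      (∏ k, Wb p (ε k)) * ((if ε i then (1:ℂ) else 0) * (if ε j then (1:ℂ) else 0))
        = ∏ k, (Wb p (ε k) * ((if k = i then (if ε k then (1:ℂ) else 0) else 1)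
            * (if k = j then (if ε k then (1:ℂ) else 0) else 1))) := by
    intro ε
    rw [Finset.prod_mul_distrib, Finset.prod_mul_distrib,
      Finset.prod_ite_eq' Finset.univ i (fun k => if ε k then (1:ℂ) else 0),
      Finset.prod_ite_eq' Finset.univ j (fun k => if ε k then (1:ℂ) else 0)]
    simp
  simp only [h]
  rw [sum_prod_bool (fun k b => Wb p b * ((if k = i then (if b then (1:ℂ) else 0) else 1)
    * (if k = j then (if b then (1:ℂ) else 0) else 1)))]
  rw [← Finset.mul_prod_erase _ _ (Finset.mem_univ i),
    ← Finset.mul_prod_erase _ _ (Finset.mem_erase.2 ⟨hij.symm, Finset.mem_univ j⟩)]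
  have h1 : (∑ b : Bool, Wb p b * ((if i = i then (if b then (1:ℂ) else 0) else 1)
      * (if i = j then (if b then (1:ℂ) else 0) else 1))) = p := by
    simp [Wb, hij]
  have h2 : (∑ b : Bool, Wb p b * ((if j = i then (if b then (1:ℂ) else 0) else 1)
      * (if j = j then (if b then (1:ℂ) else 0) else 1))) = p := by
    simp [Wb, hij.symm]
  rw [h1, h2, Finset.prod_eq_one]
  · ring
  · intro k hk
    simp only [Finset.mem_erase] at hk
    simp [Wb, hk.1, hk.2.1]

theorem stmt_10 (n : ℕ) (x : ℝ) (hx : 0 < x) (s : ℝ)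
    (hs : s = (1 - x) / (2 * Real.sqrt x))
    (p : ℝ) (hp0 : 0 ≤ p) (hp1 : p ≤ 1)
    (S : Matrix (Fin n) (Fin n) ℂ) (hherm : S.conjTranspose = S)
    (hdiag : ∀ i, S i i = ((Real.sqrt ((n : ℝ) - 1) * s : ℝ) : ℂ))
    (hoff : ∀ i j : Fin n, i ≠ j → ‖S i j‖ = 1)
    (hsq : S * S = ((((n : ℝ) - 1) * (x + 1) ^ 2 / (4 * x) : ℝ) : ℂ) • 1) :
    bernExp n p (fun ε => Matrix.trace ((selMatrix n ε * S * selMatrix n ε) ^ 2)) =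
        (((n : ℝ) * ((n : ℝ) - 1) * s ^ 2 * p + (n : ℝ) * ((n : ℝ) - 1) * p ^ 2 : ℝ) : ℂ) ∧
      Filter.Tendsto
        (fun N : ℕ =>
          ((N : ℝ) * ((N : ℝ) - 1) * s ^ 2 * p + (N : ℝ) * ((N : ℝ) - 1) * p ^ 2) / (N : ℝ) ^ 2)
        Filter.atTop (nhds (s ^ 2 * p + p ^ 2)) := by
  constructor
  · rcases Nat.eq_zero_or_pos n with hn | hn
    · subst hn
      simp [bernExp]
    · have hn1 : (1:ℝ) ≤ (n:ℝ) := by exact_mod_cast hn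
      -- trace formula
      have htr : ∀ ε : Fin n → Bool,
          Matrix.trace ((selMatrix n ε * S * selMatrix n ε) ^ 2)
            = ∑ i, ∑ j, ((if ε i then (1:ℂ) else 0) * (if ε j then (1:ℂ) else 0))
                * (S i j * S j i) := by
        intro ε
        have hM : ∀ i j, (selMatrix n ε * S * selMatrix n ε) i j
            = (if ε i then (1:ℂ) else 0) * S i j * (if ε j then (1:ℂ) else 0) := by
          intro i j
          simp [selMatrix, Matrix.diagonal_mul, Matrix.mul_diagonal]
        rw [pow_two, Matrix.trace]
        simp only [Matrix.diag, Matrix.mul_apply, hM]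
        refine Finset.sum_congr rfl fun i _ => Finset.sum_congr rfl fun j _ => ?_
        cases ε i <;> cases ε j <;> simp
      have hw : ∀ ε : Fin n → Bool,
          ((∏ i, if ε i then p else 1 - p : ℝ) : ℂ) = ∏ k, Wb p (ε k) := by
        intro ε
        push_cast
        exact Finset.prod_congr rfl fun k _ => by by_cases h : ε k <;> simp [Wb, h]
      -- expectation as double sum
      have hswap : bernExp n p
            (fun ε => Matrix.trace ((selMatrix n ε * S * selMatrix n ε) ^ 2))
          = ∑ i, ∑ j, (∑ ε : Fin n → Bool, (∏ k, Wb p (ε k)) *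
              ((if ε i then (1:ℂ) else 0) * (if ε j then (1:ℂ) else 0))) * (S i j * S j i) := by
        unfold bernExp
        simp only [htr, hw, Finset.mul_sum]
        rw [Finset.sum_comm]
        refine Finset.sum_congr rfl fun i _ => ?_
        rw [Finset.sum_comm]
        refine Finset.sum_congr rfl fun j _ => ?_
        rw [Finset.sum_mul]
        exact Finset.sum_congr rfl fun ε _ => by ring
      rw [hswap]
      -- evaluate each inner sum
      have hrow : ∀ i : Fin n,
          (∑ j, (∑ ε : Fin n → Bool, (∏ k, Wb p (ε k)) *
              ((if ε i then (1:ℂ) else 0) * (if ε j then (1:ℂ) else 0))) * (S i j * S j i))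
            = ((n:ℂ) - 1) * (s:ℂ)^2 * p + ((n:ℂ) - 1) * (p:ℂ)^2 := by
        intro i
        rw [← Finset.add_sum_erase _ _ (Finset.mem_univ i)]
        have hdiagterm : (∑ ε : Fin n → Bool, (∏ k, Wb p (ε k)) *
            ((if ε i then (1:ℂ) else 0) * (if ε i then (1:ℂ) else 0))) * (S i i * S i i)
            = ((n:ℂ) - 1) * (s:ℂ)^2 * p := by
          have hsq1 : ∀ ε : Fin n → Bool,
              ((if ε i then (1:ℂ) else 0) * (if ε i then (1:ℂ) else 0))
                = (if ε i then (1:ℂ) else 0) := by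
            intro ε; cases ε i <;> simp
          simp only [hsq1]
          rw [bern_single]
          rw [hdiag i, ← Complex.ofReal_mul]
          have : Real.sqrt ((n:ℝ) - 1) * s * (Real.sqrt ((n:ℝ) - 1) * s)
              = ((n:ℝ) - 1) * s^2 := by
            rw [mul_mul_mul_comm, Real.mul_self_sqrt (by linarith)]
            ring
          rw [this]
          push_cast
          ring
        have hoffterm : ∀ j ∈ Finset.univ.erase i,
            (∑ ε : Fin n → Bool, (∏ k, Wb p (ε k)) *
              ((if ε i then (1:ℂ) else 0) * (if ε j then (1:ℂ) else 0))) * (S i j * S j i)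
            = (p:ℂ)^2 := by
          intro j hj
          have hij : i ≠ j := (Finset.mem_erase.1 hj).1.symm
          rw [bern_pair p i j hij]
          have hji : S j i = (starRingEnd ℂ) (S i j) := by
            conv_lhs => rw [← hherm]
            rw [Matrix.conjTranspose_apply]
            rfl
          rw [hji, Complex.mul_conj, ← Complex.sq_norm, hoff i j hij]
          norm_num
        rw [hdiagterm, Finset.sum_congr rfl hoffterm, Finset.sum_const,
          Finset.card_erase_of_mem (Finset.mem_univ i), Finset.card_univ,
          Fintype.card_fin, nsmul_eq_mul]
        have : ((n - 1 : ℕ) : ℂ) = (n:ℂ) - 1 := by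
          rw [Nat.cast_sub hn]
          norm_num
        rw [this]
      rw [Finset.sum_congr rfl (fun i _ => hrow i), Finset.sum_const, Finset.card_univ,
        Fintype.card_fin, nsmul_eq_mul]
      push_cast
      ring
  · have h1 : Filter.Tendsto (fun N : ℕ => (s^2*p+p^2) * (1 - 1/(N:ℝ)))
        Filter.atTop (nhds (s^2*p+p^2)) := by
      have h2 : Filter.Tendsto (fun N : ℕ => 1 - 1/(N:ℝ)) Filter.atTop (nhds (1-0)) :=
        tendsto_const_nhds.sub tendsto_one_div_atTop_nhds_zero_nat
      simpa using tendsto_const_nhds.mul h2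
    apply h1.congr'
    filter_upwards [Filter.eventually_ge_atTop 1] with N hN
    have hN0 : (N:ℝ) ≠ 0 := by
      have : (1:ℝ) ≤ (N:ℝ) := by exact_mod_cast hN
      linarith
    field_simp
end

section
/- Let ε_1, …, ε_n be i.i.d. Bernoulli(p) random variables and S an n × n complex matrix. Then E[trace((PSP)^k)] = ∑ over functions a : Fin k → Fin n of p^{|range(a)|} * ∏_{j} S_{a(j), a(j+1 mod k)}, where |range(a)| is the number of distinct values taken by a. -/
lemma snoc_cons_succ {α : Type*} {m : ℕ} (x : α) (a : Fin m → α) (j : α) (t : Fin (m + 1)) :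
    (Fin.snoc (Fin.cons x a : Fin (m + 1) → α) j : Fin (m + 2) → α) t.succ
      = (Fin.snoc a j : Fin (m + 1) → α) t := by
  induction t using Fin.lastCases with
  | last => simp [Fin.succ_last]
  | cast s => simp only [Fin.succ_castSucc, Fin.snoc_castSucc, Fin.cons_succ]

lemma snoc_eq_cons_add_one {α : Type*} {m : ℕ} (i : α) (a : Fin m → α) (t : Fin (m + 1)) :
    (Fin.snoc a i : Fin (m + 1) → α) t = (Fin.cons i a : Fin (m + 1) → α) (t + 1) := by
  induction t using Fin.lastCases with
  | last => simp [Fin.last_add_one]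
  | cast s =>
    have h : (Fin.castSucc s) + 1 = s.succ := by
      ext; simp [Fin.add_def]
    rw [h]; simp

lemma pow_apply_eq {n : ℕ} (A : Matrix (Fin n) (Fin n) ℂ) :
    ∀ (m : ℕ) (i j : Fin n), (A ^ (m + 1)) i j =
      ∑ a : Fin m → Fin n, ∏ t : Fin (m + 1),
        A ((Fin.cons i a : Fin (m + 1) → Fin n) t) ((Fin.snoc a j : Fin (m + 1) → Fin n) t) := by
  intro m
  induction m with
  | zero =>
    intro i j
    simp [pow_one, Fin.snoc]
  | succ m ih =>
    intro i j
    rw [pow_succ', Matrix.mul_apply]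
    simp_rw [ih, Finset.mul_sum]
    rw [← Fintype.sum_prod_type']
    refine Fintype.sum_equiv (Fin.consEquiv fun _ => Fin n) _ _ ?_
    rintro ⟨x, a⟩
    have hb : ((Fin.consEquiv fun _ => Fin n) (x, a)) = Fin.cons x a := rfl
    rw [hb]
    conv_rhs => rw [Fin.prod_univ_succ]
    congr 1
    · exact Finset.prod_congr rfl fun t _ => by rw [snoc_cons_succ, Fin.cons_succ]

lemma trace_pow_eq {n : ℕ} (A : Matrix (Fin n) (Fin n) ℂ) (m : ℕ) :
    (A ^ (m + 1)).trace = ∑ b : Fin (m + 1) → Fin n, ∏ t : Fin (m + 1), A (b t) (b (t + 1)) := by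
  rw [Matrix.trace]
  simp only [Matrix.diag_apply]
  simp_rw [pow_apply_eq]
  rw [← Fintype.sum_prod_type']
  refine Fintype.sum_equiv (Fin.consEquiv fun _ => Fin n) _ _ ?_
  rintro ⟨i, a⟩
  have hb : ((Fin.consEquiv fun _ => Fin n) (i, a)) = Fin.cons i a := rfl
  rw [hb]
  exact Finset.prod_congr rfl fun t _ => by rw [snoc_eq_cons_add_one]

lemma bern_count (n : ℕ) (p : ℝ) (T : Finset (Fin n)) :
    ∑ ε : Fin n → Bool, ((∏ i, if ε i then p else 1 - p : ℝ) : ℂ) *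
      ∏ i ∈ T, (if ε i then (1 : ℂ) else 0) = (p : ℂ) ^ T.card := by
  have key : ∀ ε : Fin n → Bool,
      ((∏ i, if ε i then p else 1 - p : ℝ) : ℂ) * ∏ i ∈ T, (if ε i then (1 : ℂ) else 0)
        = ∏ i, ((if ε i then (p : ℂ) else 1 - p) *
            (if i ∈ T then (if ε i then (1 : ℂ) else 0) else 1)) := by
    intro ε
    rw [Finset.prod_mul_distrib]
    congr 1
    · push_cast
      exact Finset.prod_congr rfl fun i _ => by by_cases h : ε i <;> simp [h]
    · rw [Finset.prod_ite_mem, Finset.univ_inter]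
  simp_rw [key]
  rw [← Fintype.piFinset_univ, Finset.sum_prod_piFinset (Finset.univ : Finset Bool)
    (fun i b => (if b then (p : ℂ) else 1 - p) *
      (if i ∈ T then (if b then (1 : ℂ) else 0) else 1))]
  have h1 : ∀ i : Fin n, (∑ b ∈ (Finset.univ : Finset Bool),
      ((if b then (p : ℂ) else 1 - p) * (if i ∈ T then (if b then (1 : ℂ) else 0) else 1)))
        = if i ∈ T then (p : ℂ) else 1 := by
    intro i
    by_cases h : i ∈ T <;> simp [h, Fintype.sum_bool]
  simp_rw [h1]
  rw [Finset.prod_ite_mem, Finset.univ_inter, Finset.prod_const]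

theorem stmt_11 (n k : ℕ) (p : ℝ) (hp0 : 0 ≤ p) (hp1 : p ≤ 1)
    (S : Matrix (Fin n) (Fin n) ℂ) :
    bernExp n p (fun ε => Matrix.trace ((selMatrix n ε * S * selMatrix n ε) ^ (k + 1))) =
      ∑ a : Fin (k + 1) → Fin n,
        ((p : ℂ) ^ (Finset.univ.image a).card) * ∏ j : Fin (k + 1), S (a j) (a (j + 1)) := by
  have hM : ∀ (ε : Fin n → Bool) (i j : Fin n), (selMatrix n ε * S * selMatrix n ε) i j
      = (if ε i then (1 : ℂ) else 0) * S i j * (if ε j then (1 : ℂ) else 0) := by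
    intro ε i j
    rw [selMatrix, Matrix.mul_diagonal, Matrix.diagonal_mul]
  have hprod : ∀ (ε : Fin n → Bool) (a : Fin (k + 1) → Fin n),
      (∏ j : Fin (k + 1), (selMatrix n ε * S * selMatrix n ε) (a j) (a (j + 1)))
        = (∏ i ∈ Finset.univ.image a, (if ε i then (1 : ℂ) else 0)) *
            ∏ j : Fin (k + 1), S (a j) (a (j + 1)) := by
    intro ε a
    simp_rw [hM]
    rw [Finset.prod_mul_distrib, Finset.prod_mul_distrib]
    have h1 : ∏ j : Fin (k + 1), (if ε (a (j + 1)) then (1 : ℂ) else 0)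
        = ∏ j : Fin (k + 1), (if ε (a j) then (1 : ℂ) else 0) :=
      Equiv.prod_comp (Equiv.addRight (1 : Fin (k + 1))) fun j => if ε (a j) then (1 : ℂ) else 0
    rw [h1]
    have h2 : ∏ j : Fin (k + 1), (if ε (a j) then (1 : ℂ) else 0)
        = ∏ i ∈ Finset.univ.image a, (if ε i then (1 : ℂ) else 0) := by
      rw [Finset.prod_comp (fun i => if ε i then (1 : ℂ) else 0) a]
      refine Finset.prod_congr rfl fun i hi => ?_
      have hc : (Finset.univ.filter fun j => a j = i).card ≠ 0 := by
        rw [Finset.card_ne_zero, Finset.filter_nonempty_iff]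
        obtain ⟨j, _, hj⟩ := Finset.mem_image.mp hi
        exact ⟨j, Finset.mem_univ j, hj⟩
      by_cases h : ε i <;> simp [h, zero_pow hc]
    rw [h2]
    have hE : (∏ i ∈ Finset.univ.image a, if ε i then (1 : ℂ) else 0) *
        (∏ i ∈ Finset.univ.image a, if ε i then (1 : ℂ) else 0)
          = ∏ i ∈ Finset.univ.image a, if ε i then (1 : ℂ) else 0 := by
      rw [← Finset.prod_mul_distrib]
      exact Finset.prod_congr rfl fun i _ => by by_cases h : ε i <;> simp [h]
    rw [mul_comm, ← mul_assoc, hE]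
  unfold bernExp
  simp_rw [trace_pow_eq, hprod, Finset.mul_sum]
  rw [Finset.sum_comm]
  refine Finset.sum_congr rfl fun a _ => ?_
  rw [← bern_count n p (Finset.univ.image a), Finset.sum_mul]
  exact Finset.sum_congr rfl fun ε _ => by ring
end

section
/- Let S be an n × n complex matrix with every diagonal entry equal to d, and let π be a partition of [k] containing two cyclically consecutive indices j, j+1 in the same block. Then for every a ∈ L_n(π), the cyclic product ∏_i S_{a(i),a(i+1)} equals d times the corresponding cyclic product of length k-1 with index j removed; consequently ∑_{a ∈ L_n(π)} ∏_i S_{a(i),a(i+1)} = d · ∑_{a' ∈ L_n(π')} ∏_i S_{a'(i),a'(i+1)}, where π' is π restricted to [k] \ {j}. -/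
/-- The set of maps `a : Fin k → Fin n` whose level sets (fibers) are exactly the
blocks of the partition `P`. -/
def levelSetMaps (n k : ℕ) (P : Finpartition (Finset.univ : Finset (Fin k))) :
    Finset (Fin k → Fin n) :=
  Finset.univ.filter fun a =>
    Finset.image (fun i => Finset.univ.filter fun j => a j = a i) Finset.univ = P.parts

theorem keylem (k : ℕ) (j : Fin (k+2)) (i : Fin (k+1)) :
    j.succAbove (i+1) = j.succAbove i + 1 ∨
    (j.succAbove i + 1 = j ∧ j.succAbove (i+1) = j + 1) := by
  have h1 : ∀ m : Fin (k+1), (j.succAbove m).val = if m.val < j.val then m.val else m.val + 1 := by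
    intro m
    rw [Fin.succAbove]
    split
    · next h => rw [Fin.lt_iff_val_lt_val, Fin.coe_castSucc] at h
                simp only [Fin.coe_castSucc]; rw [if_pos h]
    · next h => rw [Fin.lt_iff_val_lt_val, Fin.coe_castSucc, not_lt] at h
                simp only [Fin.val_succ]; rw [if_neg (by omega)]
  have hadd2 : ∀ x : Fin (k+2), (x + 1).val = (x.val + 1) % (k+2) := by
    intro x; rw [Fin.add_def]; simp
  have hadd1 : ((i + 1 : Fin (k+1))).val = (i.val + 1) % (k+1) := by
    rw [Fin.add_def]; simp
  have hik := i.isLt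
  have hjk := j.isLt
  have hsi := h1 i
  have hsi1 := h1 (i+1)
  rcases Nat.lt_or_ge (i.val + 1) (k+1) with hi | hi
  · have hv1 : ((i+1 : Fin (k+1))).val = i.val + 1 := by rw [hadd1, Nat.mod_eq_of_lt hi]
    have hslt : (j.succAbove i).val + 1 < k + 2 := by split at hsi <;> omega
    have hv2 : (j.succAbove i + 1).val = (j.succAbove i).val + 1 := by
      rw [hadd2, Nat.mod_eq_of_lt hslt]
    rw [hv1] at hsi1
    by_cases hcase : (j.succAbove i).val + 1 = j.val
    · right
      refine ⟨Fin.ext (by rw [hv2]; exact hcase), Fin.ext ?_⟩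
      have hjlt : j.val + 1 < k + 2 := by
        rw [hsi] at hcase; split_ifs at hcase <;> omega
      rw [hsi1, hadd2, Nat.mod_eq_of_lt hjlt]
      rw [hsi] at hcase
      split_ifs at hcase ⊢ <;> omega
    · left
      apply Fin.ext
      rw [hsi1, hv2, hsi]
      rw [hsi] at hcase
      split_ifs at hcase ⊢ <;> omega
  · have hieq : i.val = k := by omega
    have hv1 : ((i+1 : Fin (k+1))).val = 0 := by rw [hadd1, hieq]; exact Nat.mod_self _
    rw [hv1] at hsi1
    rw [hieq] at hsi
    have m0 : (k + 1 + 1) % (k+2) = 0 := Nat.mod_self _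
    have m1 : (k + 1) % (k+2) = k + 1 := Nat.mod_eq_of_lt (by omega)
    by_cases hj0 : j.val = 0
    · right
      constructor
      · apply Fin.ext
        rw [hadd2, hsi, if_neg (by omega), m0, hj0]
      · apply Fin.ext
        rw [hsi1, if_neg (by omega), hadd2, hj0, Nat.mod_eq_of_lt (by omega)]
    · by_cases hjtop : j.val = k + 1
      · right
        constructor
        · apply Fin.ext
          rw [hadd2, hsi, if_pos (by omega), m1, hjtop]
        · apply Fin.ext
          rw [hsi1, if_pos (by omega), hadd2, hjtop, m0]
      · left
        apply Fin.ext
        rw [hsi1, if_pos (by omega), hadd2, hsi, if_neg (by omega), m0]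

theorem stmt_18 (n k : ℕ) (d : ℂ)
    (S : Matrix (Fin n) (Fin n) ℂ) (hdiag : ∀ i, S i i = d)
    (P : Finpartition (Finset.univ : Finset (Fin (k + 2))))
    (j : Fin (k + 2)) (hjj : ∃ B ∈ P.parts, j ∈ B ∧ j + 1 ∈ B) :
    (∀ a ∈ levelSetMaps n (k + 2) P,
        ∏ i : Fin (k + 2), S (a i) (a (i + 1)) =
          d * ∏ i : Fin (k + 1), S (a (j.succAbove i)) (a (j.succAbove (i + 1)))) ∧
      ∑ a ∈ levelSetMaps n (k + 2) P, ∏ i : Fin (k + 2), S (a i) (a (i + 1)) =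
        d * ∑ a ∈ levelSetMaps n (k + 2) P,
          ∏ i : Fin (k + 1), S (a (j.succAbove i)) (a (j.succAbove (i + 1))) := by
  have main : ∀ a ∈ levelSetMaps n (k + 2) P,
      ∏ i : Fin (k + 2), S (a i) (a (i + 1)) =
        d * ∏ i : Fin (k + 1), S (a (j.succAbove i)) (a (j.succAbove (i + 1))) := by
    intro a ha
    -- a j = a (j+1)
    have hja : a j = a (j + 1) := by
      rw [levelSetMaps, Finset.mem_filter] at ha
      obtain ⟨-, hparts⟩ := ha
      obtain ⟨B, hB, hjB, hj1B⟩ := hjj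
      rw [← hparts] at hB
      obtain ⟨i, -, hBi⟩ := Finset.mem_image.mp hB
      rw [← hBi, Finset.mem_filter] at hjB hj1B
      rw [hjB.2, hj1B.2]
    rw [Fin.prod_univ_succAbove (fun i => S (a i) (a (i + 1))) j]
    have hd : S (a j) (a (j + 1)) = d := by rw [← hja]; exact hdiag _
    rw [hd]
    congr 1
    apply Finset.prod_congr rfl
    intro i _
    rcases keylem k j i with h | ⟨h1, h2⟩
    · rw [h]
    · rw [h1, h2, ← hja]
  refine ⟨main, ?_⟩
  rw [Finset.mul_sum]
  exact Finset.sum_congr rfl main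
end
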